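/- Define P(x) = (1/14912370)|Σ_{k=0}^{16} c_k e^{ikx}|^2 where c_0 = 4, c_1 = -8, c_2 = 2, c_3 = 20, c_4 = -9, c_5 = -34, c_6 = 27, c_7 = 91, c_8 = -27, c_9 = -201, c_{10} = 32, c_{11} = 895, c_{12} = 1949, c_{13} = 2389, c_{14} = 1896, c_{15} = 949, c_{16} = 239. Then P(x) ≥ 0 for all real x, P(x) = Σ_{k=0}^{16} a_k cos(kx) with all a_k ≥ 0, a_0 = 1, and a_1 = 865534/497079 > a_0. -/

import Mathlib

open Finset

/-- The coefficients `c_k` of the degree-16 polynomial. -/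
noncomputable def cCoeff : ℕ → ℝ := fun k =>
  ([4, -8, 2, 20, -9, -34, 27, 91, -27, -201, 32, 895, 1949, 2389, 1896, 949, 239] : List ℝ).getD k 0

/-- The Fourier cosine coefficients `a_j` of `P`. -/
noncomputable def aCoeff : ℕ → ℝ := fun j =>
  if j = 0 then (∑ k ∈ range 17, (cCoeff k)^2) / 14912370
  else 2 * (∑ k ∈ range 17, cCoeff k * cCoeff (k + j)) / 14912370

/-- The trigonometric polynomial `P`. -/
noncomputable def Ptrig (x : ℝ) : ℝ :=
  (1 / 14912370) * (‖∑ k ∈ range 17, (cCoeff k : ℂ)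
    * Complex.exp (Complex.I * (k : ℂ) * (x : ℂ))‖)^2

lemma cCoeff_eq_zero {n : ℕ} (hn : 17 ≤ n) : cCoeff n = 0 := by
  unfold cCoeff
  apply List.getD_eq_default
  simpa using hn

lemma term_re (a b : ℕ) (x : ℝ) :
    ((cCoeff a : ℂ) * Complex.exp (Complex.I * a * x) *
      (starRingEnd ℂ) ((cCoeff b : ℂ) * Complex.exp (Complex.I * b * x))).re
      = cCoeff a * cCoeff b * Real.cos (((a:ℝ) - b) * x) := by
  rw [map_mul, ← Complex.exp_conj]
  have h1 : (starRingEnd ℂ) (Complex.I * b * x) = -(Complex.I * b * x) := by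
    simp [Complex.conj_I]
  rw [h1, Complex.conj_ofReal,
    show (cCoeff a : ℂ) * Complex.exp (Complex.I * a * x) * ((cCoeff b : ℂ) *
      Complex.exp (-(Complex.I * b * x))) =
      ((cCoeff a * cCoeff b : ℝ) : ℂ) * Complex.exp (Complex.I * a * x + -(Complex.I * b * x)) by
        rw [Complex.exp_add]; push_cast; ring,
    show Complex.I * a * x + -(Complex.I * b * x) = (((a:ℝ) - b) * x : ℝ) * Complex.I by
      push_cast; ring]
  rw [Complex.re_ofReal_mul, Complex.exp_ofReal_mul_I_re]

lemma key (x : ℝ) :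
    (‖∑ k ∈ range 17, (cCoeff k : ℂ) * Complex.exp (Complex.I * (k : ℂ) * (x : ℂ))‖)^2
      = ∑ k ∈ range 17, ∑ l ∈ range 17, cCoeff k * cCoeff l * Real.cos (((k:ℝ) - l) * x) := by
  set z : ℂ := ∑ k ∈ range 17, (cCoeff k : ℂ) * Complex.exp (Complex.I * (k : ℂ) * (x : ℂ)) with hz
  have h : (‖z‖)^2 = (z * (starRingEnd ℂ) z).re := by
    rw [Complex.mul_conj, ← Complex.sq_norm, Complex.ofReal_re]
  rw [h, hz, map_sum, Finset.sum_mul_sum, Complex.re_sum]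
  refine Finset.sum_congr rfl fun k _ => ?_
  rw [Complex.re_sum]
  exact Finset.sum_congr rfl fun l _ => term_re k l x

set_option maxHeartbeats 4000000 in
lemma comb (x : ℝ) :
    ∑ k ∈ range 17, ∑ l ∈ range 17, cCoeff k * cCoeff l * Real.cos (((k:ℝ) - l) * x)
      = 14912370 * ∑ k ∈ range 17, aCoeff k * Real.cos ((k : ℝ) * x) := by
  simp only [Finset.sum_range_succ, Finset.sum_range_zero, aCoeff, cCoeff]
  norm_num [Real.cos_neg, neg_mul, neg_sub]
  ring

set_option maxHeartbeats 1000000 in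
lemma aCoeff_nonneg : ∀ k : ℕ, 0 ≤ aCoeff k := by
  intro k
  by_cases hk : k ≤ 16
  · interval_cases k <;>
      norm_num [aCoeff, cCoeff, Finset.sum_range_succ]
  · have hk' : 17 ≤ k := by omega
    have : aCoeff k = 0 := by
      unfold aCoeff
      rw [if_neg (by omega)]
      have : ∀ i ∈ range 17, cCoeff i * cCoeff (i + k) = 0 := fun i _ => by
        rw [cCoeff_eq_zero (n := i + k) (by omega), mul_zero]
      rw [Finset.sum_congr rfl this]
      simp
    rw [this]

theorem stmt_4 :
    (∀ x : ℝ, Ptrig x ≥ 0) ∧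
    (∀ x : ℝ, Ptrig x = ∑ k ∈ range 17, aCoeff k * Real.cos (k * x)) ∧
    (∀ k : ℕ, 0 ≤ aCoeff k) ∧
    aCoeff 0 = 1 ∧
    aCoeff 1 = 865534 / 497079 ∧
    aCoeff 0 < aCoeff 1 := by
  have h0 : aCoeff 0 = 1 := by
    norm_num [aCoeff, cCoeff, Finset.sum_range_succ]
  have h1 : aCoeff 1 = 865534 / 497079 := by
    norm_num [aCoeff, cCoeff, Finset.sum_range_succ]
  refine ⟨fun x => ?_, fun x => ?_, aCoeff_nonneg, h0, h1, ?_⟩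
  · unfold Ptrig; positivity
  · unfold Ptrig
    rw [key, comb]
    ring
  · rw [h0, h1]; norm_num
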